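/- For a connected finite graph G with cycle-space matrix A(x) defined from a basis of cycles c₁,…,c_{m−l+1} with entries A_{i,i}(x) = Σ_{e∈c_i} 1/x_e and A_{i,j}(x) = Σ_{e∈c_i∩c_j} ±1/x_e (sign according to relative orientation), one has det A(x) = Σ_{T spanning tree of G} Π_{e∉E(T)} 1/x_e. In particular det A(x) is independent of the choice of cycle basis arising from a spanning tree. -/

import Mathlib

open scoped Classical

lemma bdry_walk {V E : Type*} [Fintype E] [DecidableEq V] [DecidableEq E]
    (src tgt : E → V) (T' : Finset E) {u v : V}
    (h : (SimpleGraph.fromEdgeSet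
      {s | ∃ e ∈ T', src e ≠ tgt e ∧ s = s(src e, tgt e)}).Reachable u v) :
    ∃ z : E → ℤ, (∀ e, z e ≠ 0 → e ∈ T' ∧ src e ≠ tgt e) ∧ ∀ w : V,
      ∑ e, z e * ((if tgt e = w then 1 else 0) - (if src e = w then 1 else 0)) =
        ((if u = w then 1 else 0) - (if v = w then (1:ℤ) else 0)) := by
  obtain ⟨p⟩ := h
  induction p with
  | nil => exact ⟨0, by simp, by simp⟩
  | @cons a b v h p ih =>
    obtain ⟨z₁, hz₁, hb₁⟩ := ih
    rw [SimpleGraph.fromEdgeSet_adj] at h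
    obtain ⟨⟨e, heT, hne, hs⟩, hab⟩ := h
    rw [Sym2.eq_iff] at hs
    rcases hs with ⟨h1, h2⟩ | ⟨h1, h2⟩
    · -- a = src e, b = tgt e ;  z := z₁ - single e
      refine ⟨fun e' => z₁ e' - (if e' = e then 1 else 0), ?_, ?_⟩
      · intro e' he'
        by_cases h' : e' = e
        · exact h' ▸ ⟨heT, hne⟩
        · exact hz₁ e' (by simpa [h'] using he')
      · intro w
        have : ∑ e', ((z₁ e' - if e' = e then 1 else 0) *
            ((if tgt e' = w then 1 else 0) - (if src e' = w then 1 else 0))) =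
            (∑ e', z₁ e' * ((if tgt e' = w then 1 else 0) - (if src e' = w then 1 else 0)))
            - ((if tgt e = w then 1 else 0) - (if src e = w then 1 else 0)) := by
          have h3 : ∑ e', ((z₁ e' - if e' = e then 1 else 0) *
              ((if tgt e' = w then 1 else 0) - (if src e' = w then 1 else 0))) =
              (∑ e', z₁ e' * ((if tgt e' = w then 1 else 0) - (if src e' = w then 1 else 0)))
              - ∑ e', (if e' = e then (1:ℤ) else 0) *
                ((if tgt e' = w then 1 else 0) - (if src e' = w then 1 else 0)) := by
            rw [← Finset.sum_sub_distrib]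
            exact Finset.sum_congr rfl fun e' _ => by ring
          rw [h3]
          congr 1
          simp
        rw [this, hb₁, ← h1, ← h2]
        ring
    · -- a = tgt e, b = src e ;  z := z₁ + single e
      refine ⟨fun e' => z₁ e' + (if e' = e then 1 else 0), ?_, ?_⟩
      · intro e' he'
        by_cases h' : e' = e
        · exact h' ▸ ⟨heT, hne⟩
        · exact hz₁ e' (by simpa [h'] using he')
      · intro w
        have : ∑ e', ((z₁ e' + if e' = e then 1 else 0) *
            ((if tgt e' = w then 1 else 0) - (if src e' = w then 1 else 0))) =
            (∑ e', z₁ e' * ((if tgt e' = w then 1 else 0) - (if src e' = w then 1 else 0)))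
            + ((if tgt e = w then 1 else 0) - (if src e = w then 1 else 0)) := by
          have h3 : ∑ e', ((z₁ e' + if e' = e then 1 else 0) *
              ((if tgt e' = w then 1 else 0) - (if src e' = w then 1 else 0))) =
              (∑ e', z₁ e' * ((if tgt e' = w then 1 else 0) - (if src e' = w then 1 else 0)))
              + ∑ e', (if e' = e then (1:ℤ) else 0) *
                ((if tgt e' = w then 1 else 0) - (if src e' = w then 1 else 0)) := by
            rw [← Finset.sum_add_distrib]
            exact Finset.sum_congr rfl fun e' _ => by ring
          rw [h3]
          congr 1
          simp
        rw [this, hb₁, ← h1, ← h2]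
        ring

lemma sum_of_support {E M : Type*} [Fintype E] [AddCommMonoid M] (p : E → Prop)
    [DecidablePred p] (g : E → M) (h : ∀ e, ¬ p e → g e = 0) :
    ∑ e : {e : E // p e}, g e.val = ∑ e, g e := by
  rw [← Finset.sum_subtype (Finset.univ.filter p) (by simp) g]
  exact Finset.sum_filter_of_ne (fun e _ hne => by by_contra hp; exact hne (h e hp))

lemma tree_flow_zero {V E : Type*} [Fintype V] [Fintype E] [DecidableEq V] [DecidableEq E]
    (src tgt : E → V) (T' : Finset E)
    (hcard : (T'.filter (fun e => src e ≠ tgt e)).card = Fintype.card V - 1)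
    (hconn : (SimpleGraph.fromEdgeSet
      {s | ∃ e ∈ T', src e ≠ tgt e ∧ s = s(src e, tgt e)}).Connected)
    (d : E → ℝ) (hd : ∀ e, d e ≠ 0 → e ∈ T' ∧ src e ≠ tgt e)
    (hb : ∀ w : V, ∑ e, d e * ((if tgt e = w then 1 else 0) - (if src e = w then 1 else 0)) = 0) :
    d = 0 := by
  haveI : Nonempty V := hconn.nonempty
  set p : E → Prop := fun e => e ∈ T' ∧ src e ≠ tgt e with hp
  -- the boundary linear map on edges of T'
  let L : ({e : E // p e} → ℝ) →ₗ[ℝ] (V → ℝ) :=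
    { toFun := fun y w => ∑ e : {e : E // p e},
        y e * ((if tgt e.val = w then 1 else 0) - (if src e.val = w then 1 else 0))
      map_add' := by
        intro y₁ y₂; funext w
        simp [add_mul, Finset.sum_add_distrib]
      map_smul' := by
        intro r y; funext w
        simp only [Pi.smul_apply, smul_eq_mul, RingHom.id_apply]
        rw [Finset.mul_sum]
        exact Finset.sum_congr rfl fun e _ => by ring }
  have hcardτ : Fintype.card {e : E // p e} = Fintype.card V - 1 := by
    rw [Fintype.card_subtype]
    rw [← hcard]
    congr 1
    ext e
    simp [hp]
  -- the sum functional
  let sumF : (V → ℝ) →ₗ[ℝ] ℝ :=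
    { toFun := fun f => ∑ v, f v
      map_add' := by intro f g; simp [Finset.sum_add_distrib]
      map_smul' := by intro r f; simp [Finset.mul_sum] }
  have hsumF_surj : Function.Surjective sumF := by
    intro r
    obtain ⟨v₀⟩ := ‹Nonempty V›
    exact ⟨fun w => if w = v₀ then r else 0, by simp [sumF]⟩
  have hker_sumF : Module.finrank ℝ (LinearMap.ker sumF) = Fintype.card V - 1 := by
    have h1 := LinearMap.finrank_range_add_finrank_ker sumF
    rw [Module.finrank_fintype_fun_eq_card, LinearMap.range_eq_top.mpr hsumF_surj,
      finrank_top] at h1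
    simp only [Module.finrank_self] at h1
    omega
  -- δ vectors are in the range of L
  have hdelta : ∀ u v : V, (fun w => (if u = w then (1:ℝ) else 0) - (if v = w then 1 else 0))
      ∈ LinearMap.range L := by
    intro u v
    obtain ⟨z, hz, hbz⟩ := bdry_walk src tgt T' (hconn.preconnected u v)
    refine ⟨fun e => (z e.val : ℝ), ?_⟩
    funext w
    have eq1 := sum_of_support p
      (fun e => (z e : ℝ) * ((if tgt e = w then (1:ℝ) else 0) - (if src e = w then 1 else 0)))
      (fun e he => by
        have h0 : z e = 0 := by by_contra h0; exact he (hz e h0)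
        simp [h0])
    have eq2 : ∑ e, (z e : ℝ) * ((if tgt e = w then (1:ℝ) else 0) - (if src e = w then 1 else 0))
        = (if u = w then (1:ℝ) else 0) - (if v = w then 1 else 0) := by
      have h3 := congrArg (fun t : ℤ => (t : ℝ)) (hbz w)
      simpa [apply_ite (fun t : ℤ => (t : ℝ))] using h3
    exact eq1.trans eq2
  have hker_le : LinearMap.ker sumF ≤ LinearMap.range L := by
    intro f hf
    obtain ⟨v₀⟩ := ‹Nonempty V›
    have hf0 : ∑ v, f v = 0 := hf
    have hrepr : f = ∑ v : V, f v • (fun w => (if v = w then (1:ℝ) else 0) - (if v₀ = w then 1 else 0)) := by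
      funext w
      rw [Finset.sum_apply]
      simp only [Pi.smul_apply, smul_eq_mul, mul_sub]
      rw [Finset.sum_sub_distrib]
      have e1 : ∑ v : V, f v * (if v = w then (1:ℝ) else 0) = f w := by
        simp [Finset.sum_ite_eq']
      have e2 : ∑ v : V, f v * (if v₀ = w then (1:ℝ) else 0) = 0 := by
        rw [← Finset.sum_mul, hf0, zero_mul]
      rw [e1, e2, sub_zero]
    rw [hrepr]
    exact Submodule.sum_mem _ fun v _ => Submodule.smul_mem _ _ (hdelta v v₀)
  have hinj : Function.Injective L := by
    rw [← LinearMap.ker_eq_bot]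
    rw [← Submodule.finrank_eq_zero (R := ℝ)]
    have h1 := LinearMap.finrank_range_add_finrank_ker L
    rw [Module.finrank_fintype_fun_eq_card, hcardτ] at h1
    have h2 : Fintype.card V - 1 ≤ Module.finrank ℝ (LinearMap.range L) := by
      rw [← hker_sumF]
      exact Submodule.finrank_mono hker_le
    omega
  -- conclude
  have hy : (fun e : {e : E // p e} => d e.val) = 0 := by
    apply hinj
    rw [map_zero]
    funext w
    exact (sum_of_support p
      (fun e => d e * ((if tgt e = w then (1:ℝ) else 0) - (if src e = w then 1 else 0)))
      (fun e he => by
        have h0 : d e = 0 := by by_contra h0; exact he (hd e h0)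
        simp [h0])).trans (hb w)
  funext e
  by_cases hpe : p e
  · exact congrFun hy ⟨e, hpe⟩
  · by_contra h0
    exact hpe (hd e h0)
lemma good_det {V E : Type*} [Fintype V] [Fintype E] [DecidableEq V] [DecidableEq E]
    (src tgt : E → V) (T : Finset E)
    (c : {e : E // e ∉ T ∧ src e ≠ tgt e} → E → ℤ)
    (hdiag : ∀ f, c f f.val = 1)
    (hsupp : ∀ f e, c f e ≠ 0 → e ∈ T ∨ e = f.val)
    (hnoloop : ∀ f e, src e = tgt e → c f e = 0)
    (hcycle : ∀ f v, ∑ e, (c f e : ℝ) *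
      ((if tgt e = v then 1 else 0) - (if src e = v then 1 else 0)) = 0)
    (T' : Finset E)
    (hloops' : ∀ e, src e = tgt e → e ∈ T')
    (hcard' : (T'.filter (fun e => src e ≠ tgt e)).card = Fintype.card V - 1)
    (hconn' : (SimpleGraph.fromEdgeSet
      {s | ∃ e ∈ T', src e ≠ tgt e ∧ s = s(src e, tgt e)}).Connected)
    (φ₀ : {e : E // e ∉ T ∧ src e ≠ tgt e} → E) (hφinj : Function.Injective φ₀)
    (himg : ∀ e, e ∈ Finset.univ.image φ₀ ↔ e ∉ T') :
    (Matrix.of fun f g : {e : E // e ∉ T ∧ src e ≠ tgt e} => c g (φ₀ f)).det = 1 ∨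
    (Matrix.of fun f g : {e : E // e ∉ T ∧ src e ≠ tgt e} => c g (φ₀ f)).det = -1 := by
  -- each φ₀ g is a non-tree (w.r.t. T') non-loop edge
  have hnt : ∀ g : {e : E // e ∉ T ∧ src e ≠ tgt e}, φ₀ g ∉ T' := fun g =>
    (himg (φ₀ g)).1 (Finset.mem_image_of_mem φ₀ (Finset.mem_univ g))
  have hnl : ∀ g : {e : E // e ∉ T ∧ src e ≠ tgt e}, src (φ₀ g) ≠ tgt (φ₀ g) := fun g h => hnt g (hloops' _ h)
  -- construct fundamental cycles for T'
  have hc' : ∀ g : {e : E // e ∉ T ∧ src e ≠ tgt e}, ∃ c' : E → ℤ,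
      (∀ e, c' e ≠ 0 → e ∈ T' ∨ e = φ₀ g) ∧
      (∀ e, src e = tgt e → c' e = 0) ∧
      (∀ g' : {e : E // e ∉ T ∧ src e ≠ tgt e}, c' (φ₀ g') = if g' = g then 1 else 0) ∧
      (∀ w, ∑ e, (c' e : ℝ) *
        ((if tgt e = w then 1 else 0) - (if src e = w then 1 else 0)) = 0) := by
    intro g
    obtain ⟨z, hz, hbz⟩ := bdry_walk src tgt T'
      (hconn'.preconnected (src (φ₀ g)) (tgt (φ₀ g)))
    refine ⟨fun e => (if e = φ₀ g then 1 else 0) + z e, ?_, ?_, ?_, ?_⟩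
    · intro e he
      by_cases h1 : e = φ₀ g
      · exact Or.inr h1
      · refine Or.inl ?_
        have : z e ≠ 0 := by simpa [h1] using he
        exact (hz e this).1
    · intro e he
      have h1 : e ≠ φ₀ g := fun h => hnl g (h ▸ he)
      have h2 : z e = 0 := by
        by_contra h0
        exact (hz e h0).2 he
      simp [h1, h2]
    · intro g'
      have h2 : z (φ₀ g') = 0 := by
        by_contra h0
        exact hnt g' ((hz _ h0).1)
      have : (φ₀ g' = φ₀ g) = (g' = g) := by
        simp only [eq_iff_iff]
        exact ⟨fun h => hφinj h, fun h => h ▸ rfl⟩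
      simp [h2, this]
    · intro w
      have hsplit : ∑ e, (((if e = φ₀ g then (1:ℤ) else 0) + z e : ℤ) : ℝ) *
          ((if tgt e = w then 1 else 0) - (if src e = w then 1 else 0)) =
          (∑ e, (if e = φ₀ g then (1:ℝ) else 0) *
            ((if tgt e = w then 1 else 0) - (if src e = w then 1 else 0))) +
          ∑ e, (z e : ℝ) *
            ((if tgt e = w then 1 else 0) - (if src e = w then 1 else 0)) := by
        rw [← Finset.sum_add_distrib]
        refine Finset.sum_congr rfl fun e _ => ?_
        push_cast [apply_ite (fun t : ℤ => (t : ℝ))]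
        ring
      rw [hsplit]
      have h1 : ∑ e, (if e = φ₀ g then (1:ℝ) else 0) *
          ((if tgt e = w then 1 else 0) - (if src e = w then 1 else 0)) =
          (if tgt (φ₀ g) = w then (1:ℝ) else 0) - (if src (φ₀ g) = w then 1 else 0) := by
        simp
      have h2 : ∑ e, (z e : ℝ) *
          ((if tgt e = w then 1 else 0) - (if src e = w then 1 else 0)) =
          (if src (φ₀ g) = w then (1:ℝ) else 0) - (if tgt (φ₀ g) = w then 1 else 0) := by
        have h3 := congrArg (fun t : ℤ => (t : ℝ)) (hbz w)
        simpa [apply_ite (fun t : ℤ => (t : ℝ))] using h3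
      rw [h1, h2]
      ring
  choose c' hc's hc'l hc'd hc'b using hc'
  -- basis identity: c f = ∑ g, c f (φ₀ g) • c' g
  have hbasis : ∀ (f : {e : E // e ∉ T ∧ src e ≠ tgt e}) (e : E),
      (c f e : ℝ) = ∑ g : {e : E // e ∉ T ∧ src e ≠ tgt e}, (c f (φ₀ g) : ℝ) * (c' g e : ℝ) := by
    intro f e
    have hd0 : (fun e => (c f e : ℝ) - ∑ g : {e : E // e ∉ T ∧ src e ≠ tgt e}, (c f (φ₀ g) : ℝ) * (c' g e : ℝ)) = 0 := by
      apply tree_flow_zero src tgt T' hcard' hconn'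
      · intro e he
        by_cases hl : src e = tgt e
        · exfalso
          apply he
          have hz0 : ∀ g : {e : E // e ∉ T ∧ src e ≠ tgt e}, c' g e = 0 := fun g => hc'l g e hl
          simp [hnoloop f e hl, hz0]
        · refine ⟨?_, hl⟩
          by_contra h1
          rcases Finset.mem_image.mp ((himg e).2 h1) with ⟨g₀, _, hg₀⟩
          subst hg₀
          apply he
          have hval : ∀ g : {e : E // e ∉ T ∧ src e ≠ tgt e},
              (c' g (φ₀ g₀) : ℝ) = if g = g₀ then 1 else 0 := by
            intro g
            rw [hc'd g g₀]
            by_cases h : g = g₀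
            · simp [h]
            · simp [h, Ne.symm h]
          rw [Finset.sum_congr rfl (fun g _ => by rw [hval g])]
          simp [mul_ite]
      · intro w
        have h1 : ∀ e, (((c f e : ℝ) - ∑ g : {e : E // e ∉ T ∧ src e ≠ tgt e},
            (c f (φ₀ g) : ℝ) * (c' g e : ℝ)) *
            ((if tgt e = w then 1 else 0) - (if src e = w then 1 else 0))) =
            (c f e : ℝ) * ((if tgt e = w then 1 else 0) - (if src e = w then 1 else 0)) -
            ∑ g : {e : E // e ∉ T ∧ src e ≠ tgt e}, (c f (φ₀ g) : ℝ) * ((c' g e : ℝ) *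
              ((if tgt e = w then 1 else 0) - (if src e = w then 1 else 0))) := by
          intro e
          rw [sub_mul, Finset.sum_mul]
          congr 1
          exact Finset.sum_congr rfl fun g _ => by ring
        rw [Finset.sum_congr rfl (fun e _ => h1 e), Finset.sum_sub_distrib, hcycle f w,
          Finset.sum_comm]
        rw [Finset.sum_congr rfl (fun g (_ : g ∈ Finset.univ) =>
          (Finset.mul_sum Finset.univ _ _).symm)]
        rw [Finset.sum_congr rfl (fun g (_ : g ∈ Finset.univ) => by rw [hc'b g w, mul_zero])]
        simp
    have := congrFun hd0 e
    simp only [Pi.zero_apply, sub_eq_zero] at this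
    exact this
  -- integer matrix identity
  set B₁ : Matrix {e : E // e ∉ T ∧ src e ≠ tgt e} {e : E // e ∉ T ∧ src e ≠ tgt e} ℤ := Matrix.of fun f g : {e : E // e ∉ T ∧ src e ≠ tgt e} => c f (φ₀ g) with hB₁
  set B₂ : Matrix {e : E // e ∉ T ∧ src e ≠ tgt e} {e : E // e ∉ T ∧ src e ≠ tgt e} ℤ := Matrix.of fun g f' : {e : E // e ∉ T ∧ src e ≠ tgt e} => c' g f'.val with hB₂
  have hmul : B₁ * B₂ = 1 := by
    ext f f'
    have hℝ := hbasis f f'.val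
    have hcff' : c f f'.val = if f = f' then 1 else 0 := by
      by_cases h : f = f'
      · rw [h, hdiag]; simp [h]
      · simp only [h, if_false]
        by_contra h0
        rcases hsupp f f'.val h0 with h1 | h1
        · exact f'.prop.1 h1
        · exact h (Subtype.ext h1.symm)
    have : ((B₁ * B₂) f f' : ℤ) = c f f'.val := by
      have : ∑ g : {e : E // e ∉ T ∧ src e ≠ tgt e}, (c f (φ₀ g) : ℝ) * (c' g f'.val : ℝ) =
          ((∑ g : {e : E // e ∉ T ∧ src e ≠ tgt e}, c f (φ₀ g) * c' g f'.val : ℤ) : ℝ) := by push_cast; rfl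
      rw [this] at hℝ
      have h4 : c f f'.val = ∑ g : {e : E // e ∉ T ∧ src e ≠ tgt e}, c f (φ₀ g) * c' g f'.val := by exact_mod_cast hℝ
      rw [Matrix.mul_apply]
      exact h4.symm
    rw [this, hcff', Matrix.one_apply]
  have hdet : B₁.det * B₂.det = 1 := by
    rw [← Matrix.det_mul, hmul, Matrix.det_one]
  have hunit : IsUnit B₁.det := IsUnit.of_mul_eq_one _ hdet
  have h := Int.isUnit_iff.mp hunit
  -- our matrix is B₁ᵀ
  have htr : (Matrix.of fun f g : {e : E // e ∉ T ∧ src e ≠ tgt e} => c g (φ₀ f)) = B₁.transpose := by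
    ext f g; rfl
  rw [htr, Matrix.det_transpose]
  exact h
lemma exists_crossing {V : Type*} (G : SimpleGraph V) (U : Set V) {u v : V}
    (p : G.Walk u v) (hu : u ∈ U) (hv : v ∉ U) :
    ∃ a b, G.Adj a b ∧ a ∈ U ∧ b ∉ U := by
  induction p with
  | nil => exact absurd hu hv
  | @cons a b v h p ih =>
    by_cases hb : b ∈ U
    · exact ih hb hv
    · exact ⟨a, b, h, hu, hb⟩

lemma bad_det {V E : Type*} [Fintype V] [Fintype E] [DecidableEq V] [DecidableEq E]
    (src tgt : E → V) (T : Finset E)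
    (hconn : (SimpleGraph.fromEdgeSet
      {s | ∃ e ∈ T, src e ≠ tgt e ∧ s = s(src e, tgt e)}).Connected)
    (c : {e : E // e ∉ T ∧ src e ≠ tgt e} → E → ℤ)
    (hnoloop : ∀ f e, src e = tgt e → c f e = 0)
    (hcycle : ∀ f v, ∑ e, (c f e : ℝ) *
      ((if tgt e = v then 1 else 0) - (if src e = v then 1 else 0)) = 0)
    (T' : Finset E)
    (hnc : ¬ (SimpleGraph.fromEdgeSet
      {s | ∃ e ∈ T', src e ≠ tgt e ∧ s = s(src e, tgt e)}).Connected)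
    (φ₀ : {e : E // e ∉ T ∧ src e ≠ tgt e} → E) (hφinj : Function.Injective φ₀)
    (himg : ∀ e, e ∈ Finset.univ.image φ₀ ↔ e ∉ T') :
    (Matrix.of fun f g : {e : E // e ∉ T ∧ src e ≠ tgt e} =>
      ((c g (φ₀ f) : ℝ))).det = 0 := by
  haveI : Nonempty V := hconn.nonempty
  set G' := SimpleGraph.fromEdgeSet
    {s | ∃ e ∈ T', src e ≠ tgt e ∧ s = s(src e, tgt e)} with hG'
  have hnp : ¬ G'.Preconnected := fun h => hnc ⟨h⟩
  rw [SimpleGraph.Preconnected] at hnp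
  push_neg at hnp
  obtain ⟨u, v, huv⟩ := hnp
  set U : Set V := {w | G'.Reachable u w} with hU
  have huU : u ∈ U := SimpleGraph.Reachable.refl u
  have hvU : v ∉ U := huv
  -- edges of T' do not cross U
  have hcross' : ∀ e ∈ T', src e ≠ tgt e → (src e ∈ U ↔ tgt e ∈ U) := by
    intro e he hne
    have hadj : G'.Adj (src e) (tgt e) := by
      rw [hG', SimpleGraph.fromEdgeSet_adj]
      exact ⟨⟨e, he, hne, rfl⟩, hne⟩
    exact ⟨fun h => h.trans hadj.reachable, fun h => h.trans hadj.symm.reachable⟩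
  -- a crossing edge exists, and lies outside T'
  obtain ⟨a, b, hab, haU, hbU⟩ :=
    exists_crossing _ U (hconn.preconnected u v).some huU hvU
  rw [SimpleGraph.fromEdgeSet_adj] at hab
  obtain ⟨⟨e₁, he₁T, hne₁, hs₁⟩, _⟩ := hab
  have hcross₁ : ¬ (src e₁ ∈ U ↔ tgt e₁ ∈ U) := by
    rw [Sym2.eq_iff] at hs₁
    rcases hs₁ with ⟨h1, h2⟩ | ⟨h1, h2⟩
    · rw [← h1, ← h2]; intro h; exact hbU (h.1 haU)
    · rw [← h1, ← h2]; intro h; exact hbU (h.2 haU)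
  have he₁T' : e₁ ∉ T' := fun h => hcross₁ (hcross' e₁ h hne₁)
  obtain ⟨g₁, _, hg₁⟩ := Finset.mem_image.mp ((himg e₁).2 he₁T')
  -- the dependency vector
  set w : {e : E // e ∉ T ∧ src e ≠ tgt e} → ℝ := fun g =>
    (if tgt (φ₀ g) ∈ U then 1 else 0) - (if src (φ₀ g) ∈ U then 1 else 0) with hw
  have hw0 : w ≠ 0 := by
    intro h
    have := congrFun h g₁
    rw [hw] at this
    simp only [hg₁, Pi.zero_apply] at this
    by_cases h1 : src e₁ ∈ U <;> by_cases h2 : tgt e₁ ∈ U <;>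
      simp [h1, h2] at this hcross₁
  have hvm : Matrix.vecMul w (Matrix.of fun f g : {e : E // e ∉ T ∧ src e ≠ tgt e} =>
      ((c g (φ₀ f) : ℝ))) = 0 := by
    funext g
    rw [Matrix.vecMul, dotProduct]
    set Ufin : Finset V := Finset.univ.filter (· ∈ U) with hUfin
    have hmemU : ∀ y : V, (if y ∈ U then (1:ℝ) else 0) =
        ∑ v' ∈ Ufin, if y = v' then 1 else 0 := by
      intro y
      rw [Finset.sum_ite_eq Ufin y (fun _ => (1:ℝ))]
      simp [hUfin]
    have hstep : ∀ f : {e : E // e ∉ T ∧ src e ≠ tgt e},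
        w f * (Matrix.of fun f g : {e : E // e ∉ T ∧ src e ≠ tgt e} =>
          ((c g (φ₀ f) : ℝ))) f g =
        (c g (φ₀ f) : ℝ) * ((if tgt (φ₀ f) ∈ U then 1 else 0) -
          (if src (φ₀ f) ∈ U then 1 else 0)) := by
      intro f; rw [hw]; simp only [Matrix.of_apply]; ring
    rw [Finset.sum_congr rfl fun f _ => hstep f]
    have himage : ∑ f : {e : E // e ∉ T ∧ src e ≠ tgt e},
        (c g (φ₀ f) : ℝ) * ((if tgt (φ₀ f) ∈ U then 1 else 0) -
          (if src (φ₀ f) ∈ U then 1 else 0)) =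
        ∑ e ∈ Finset.univ.image φ₀, (c g e : ℝ) *
          ((if tgt e ∈ U then 1 else 0) - (if src e ∈ U then 1 else 0)) := by
      rw [Finset.sum_image (fun a _ b _ h => hφinj h)]
    rw [himage]
    have hext : ∑ e ∈ Finset.univ.image φ₀, (c g e : ℝ) *
          ((if tgt e ∈ U then 1 else 0) - (if src e ∈ U then 1 else 0)) =
        ∑ e, (c g e : ℝ) *
          ((if tgt e ∈ U then 1 else 0) - (if src e ∈ U then 1 else 0)) := by
      apply Finset.sum_subset (Finset.subset_univ _)
      intro e _ he
      have heT' : e ∈ T' := by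
        by_contra h
        exact he ((himg e).2 h)
      by_cases hl : src e = tgt e
      · simp [hnoloop g e hl]
      · rw [(by simp [hcross' e heT' hl] :
          (if tgt e ∈ U then (1:ℝ) else 0) = (if src e ∈ U then 1 else 0))]
        simp
    rw [hext]
    have hswap : ∑ e, (c g e : ℝ) *
          ((if tgt e ∈ U then 1 else 0) - (if src e ∈ U then 1 else 0)) =
        ∑ v' ∈ Ufin, ∑ e, (c g e : ℝ) *
          ((if tgt e = v' then 1 else 0) - (if src e = v' then 1 else 0)) := by
      rw [Finset.sum_comm]
      refine Finset.sum_congr rfl fun e _ => ?_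
      rw [hmemU (tgt e), hmemU (src e), ← Finset.sum_sub_distrib, Finset.mul_sum]
    rw [hswap]
    rw [Finset.sum_congr rfl fun v' _ => hcycle g v']
    simp
  -- conclude det = 0
  rw [← Matrix.det_transpose]
  rw [← Matrix.exists_mulVec_eq_zero_iff]
  refine ⟨w, hw0, ?_⟩
  rw [Matrix.mulVec_transpose]
  exact hvm
lemma card_split {V E : Type*} [Fintype E] [DecidableEq E] [DecidableEq V] (src tgt : E → V)
    (S : Finset E) (h : ∀ e, src e = tgt e → e ∈ S) :
    S.card = (S.filter (fun e => src e ≠ tgt e)).card +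
      (Finset.univ.filter (fun e => src e = tgt e)).card := by
  rw [← Finset.card_filter_add_card_filter_not (p := fun e => src e ≠ tgt e) (s := S)]
  have h2 : S.filter (fun e => ¬ src e ≠ tgt e) = Finset.univ.filter (fun e => src e = tgt e) := by
    ext e
    simp only [Finset.mem_filter, Finset.mem_univ, true_and, not_not]
    exact ⟨fun h1 => h1.2, fun h1 => ⟨h e h1, h1⟩⟩
  rw [h2]
set_option maxHeartbeats 1000000 in
/-- Proposition 2.6: for a connected finite graph `G` (edges given by an
abstract edge type `E` with endpoint maps `src, tgt`; loops are edges with `src e = tgt e`)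
with a spanning tree `T` (containing all loops, whose non-loop part is a tree spanning `V`)
and the fundamental cycles `c f` obtained by adding the non-tree non-loop edge `f` to `T`
(represented as integer edge vectors: supported on `T ∪ {f}`, with `c f f = 1`, vanishing
on loops and with zero boundary), the cycle-overlap matrix
`A(x)_{f,g} = Σ_e c_f(e) c_g(e) / x_e` (whose diagonal entries are `Σ_{e ∈ c_f} 1/x_e` and
off-diagonal entries carry the relative-orientation signs) satisfies
`det A(x) = Σ_{T' spanning tree} Π_{e ∉ T'} 1/x_e`.
In particular `det A(x)` is independent of the chosen spanning tree and cycle basis. -/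
theorem cycle_matrix_det {V E : Type*} [Fintype V] [Fintype E] [DecidableEq V]
    [DecidableEq E] (src tgt : E → V) (x : E → ℝ) (hx : ∀ e, 0 < x e)
    (T : Finset E)
    (hloops : ∀ e, src e = tgt e → e ∈ T)
    (hcard : (T.filter (fun e => src e ≠ tgt e)).card = Fintype.card V - 1)
    (hconn : (SimpleGraph.fromEdgeSet
      {s | ∃ e ∈ T, src e ≠ tgt e ∧ s = s(src e, tgt e)}).Connected)
    (c : {e : E // e ∉ T ∧ src e ≠ tgt e} → E → ℤ)
    (hdiag : ∀ f, c f f.val = 1)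
    (hsupp : ∀ f e, c f e ≠ 0 → e ∈ T ∨ e = f.val)
    (hnoloop : ∀ f e, src e = tgt e → c f e = 0)
    (hcycle : ∀ f v, ∑ e, (c f e : ℝ) *
      ((if tgt e = v then 1 else 0) - (if src e = v then 1 else 0)) = 0) :
    Matrix.det (Matrix.of fun f g : {e : E // e ∉ T ∧ src e ≠ tgt e} =>
        ∑ e, (c f e : ℝ) * (c g e : ℝ) * (x e)⁻¹) =
      ∑ T' ∈ Finset.univ.powerset.filter (fun T' : Finset E =>
          (∀ e, src e = tgt e → e ∈ T') ∧
          (T'.filter (fun e => src e ≠ tgt e)).card = Fintype.card V - 1 ∧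
          (SimpleGraph.fromEdgeSet
            {s | ∃ e ∈ T', src e ≠ tgt e ∧ s = s(src e, tgt e)}).Connected),
        ∏ e ∈ Finset.univ \ T', (x e)⁻¹ := by
  set P : Finset E → Prop := fun T' =>
    (∀ e, src e = tgt e → e ∈ T') ∧
    (T'.filter (fun e => src e ≠ tgt e)).card = Fintype.card V - 1 ∧
    (SimpleGraph.fromEdgeSet
      {s | ∃ e ∈ T', src e ≠ tgt e ∧ s = s(src e, tgt e)}).Connected with hP
  set F : ({e : E // e ∉ T ∧ src e ≠ tgt e} → E) → ℝ := fun r =>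
    (∏ f, ((c f (r f) : ℝ) * (x (r f))⁻¹)) *
      (Matrix.of fun f g : {e : E // e ∉ T ∧ src e ≠ tgt e} => (c g (r f) : ℝ)).det with hF
  -- Step 1: multilinear expansion of the determinant
  have expand : (Matrix.of fun f g : {e : E // e ∉ T ∧ src e ≠ tgt e} =>
      ∑ e, (c f e : ℝ) * (c g e : ℝ) * (x e)⁻¹).det = ∑ r : {e : E // e ∉ T ∧ src e ≠ tgt e} → E, F r := by
    have h1 : (Matrix.of fun f g : {e : E // e ∉ T ∧ src e ≠ tgt e} =>
        ∑ e, (c f e : ℝ) * (c g e : ℝ) * (x e)⁻¹)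
        = fun f : {e : E // e ∉ T ∧ src e ≠ tgt e} =>
          ∑ e, ((c f e : ℝ) * (x e)⁻¹) • (fun g : {e : E // e ∉ T ∧ src e ≠ tgt e} => (c g e : ℝ)) := by
      funext f g
      rw [Matrix.of_apply, Finset.sum_apply]
      exact Finset.sum_congr rfl fun e _ => by
        simp only [Pi.smul_apply, smul_eq_mul]; ring
    have h2 := Matrix.detRowAlternating.toMultilinearMap.map_sum
      (fun (f : {e : E // e ∉ T ∧ src e ≠ tgt e}) (e : E) =>
        ((c f e : ℝ) * (x e)⁻¹) • (fun g : {e : E // e ∉ T ∧ src e ≠ tgt e} => (c g e : ℝ)))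
    have h3 : ∀ r : {e : E // e ∉ T ∧ src e ≠ tgt e} → E,
        (Matrix.detRowAlternating.toMultilinearMap
          (fun f => ((c f (r f) : ℝ) * (x (r f))⁻¹) •
            (fun g : {e : E // e ∉ T ∧ src e ≠ tgt e} => (c g (r f) : ℝ)))) = F r := by
      intro r
      rw [MultilinearMap.map_smul_univ]
      simp only [hF, smul_eq_mul]
      rfl
    exact (congrArg Matrix.det h1).trans (h2.trans (Finset.sum_congr rfl fun r _ => h3 r))
  rw [expand]
  -- Step 2: non-injective terms vanish
  have hinj0 : ∑ r : {e : E // e ∉ T ∧ src e ≠ tgt e} → E, F r =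
      ∑ r ∈ Finset.univ.filter (fun r : {e : E // e ∉ T ∧ src e ≠ tgt e} → E =>
        Function.Injective r), F r := by
    symm
    apply Finset.sum_filter_of_ne
    intro r _ hr
    by_contra hni
    apply hr
    rw [Function.not_injective_iff] at hni
    obtain ⟨f₁, f₂, hval, hne⟩ := hni
    simp only [hF]
    rw [Matrix.det_zero_of_row_eq hne (funext fun g => by
      show (c g (r f₁) : ℝ) = (c g (r f₂) : ℝ)
      rw [hval]), mul_zero]
  rw [hinj0]
  -- Step 3: group by complement of image
  rw [← Finset.sum_fiberwise_of_maps_to (g := fun r : {e : E // e ∉ T ∧ src e ≠ tgt e} → E =>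
    (Finset.univ.image r)ᶜ) (fun r _ => Finset.mem_univ _) F]
  -- Step 4: evaluate each fiber
  have key : ∀ T' : Finset E,
      ∑ r ∈ (Finset.univ.filter (fun r : {e : E // e ∉ T ∧ src e ≠ tgt e} → E =>
        Function.Injective r)).filter (fun r => (Finset.univ.image r)ᶜ = T'), F r =
      if P T' then ∏ e ∈ Finset.univ \ T', (x e)⁻¹ else 0 := by
    intro T'
    have hcardK : Fintype.card {e : E // e ∉ T ∧ src e ≠ tgt e} =
        Fintype.card E - T.card := by
      rw [Fintype.card_subtype]
      have h1 : Finset.univ.filter (fun e => e ∉ T ∧ src e ≠ tgt e) = Finset.univ \ T := by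
        ext e
        simp only [Finset.mem_filter, Finset.mem_univ, true_and, Finset.mem_sdiff]
        exact ⟨fun h => h.1, fun h => ⟨h, fun hl => h (hloops e hl)⟩⟩
      rw [h1, Finset.card_sdiff_of_subset (Finset.subset_univ T), Finset.card_univ]
    by_cases hPT : P T'
    · rw [if_pos hPT]
      obtain ⟨hloops', hcard', hconn'⟩ := hPT
      -- |T'| = |T|
      have hTT' : T'.card = T.card := by
        have e1 := card_split src tgt T hloops
        have e2 := card_split src tgt T' hloops'
        rw [hcard] at e1
        rw [hcard'] at e2
        omega
      have hcardEq : Fintype.card {e : E // e ∉ T ∧ src e ≠ tgt e} =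
          Fintype.card ↥(Finset.univ \ T') := by
        rw [Fintype.card_coe, Finset.card_sdiff_of_subset (Finset.subset_univ T'), Finset.card_univ,
          hcardK, hTT']
      set ψ := Fintype.equivOfCardEq hcardEq with hψ
      set φ₀ : {e : E // e ∉ T ∧ src e ≠ tgt e} → E := fun g => (ψ g).val with hφ₀
      have hφ₀inj : Function.Injective φ₀ := fun a b h => ψ.injective (Subtype.ext h)
      have himgφ : Finset.univ.image φ₀ = Finset.univ \ T' := by
        ext e
        simp only [Finset.mem_image, Finset.mem_univ, true_and]
        constructor
        · rintro ⟨g, rfl⟩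
          exact (ψ g).prop
        · intro he
          exact ⟨ψ.symm ⟨e, he⟩, by simp [hφ₀]⟩
      have hkeyφ : (Finset.univ.image φ₀)ᶜ = T' := by
        rw [himgφ]
        ext e
        simp
      have himgiff : ∀ e, e ∈ Finset.univ.image φ₀ ↔ e ∉ T' := by
        intro e
        rw [himgφ]
        simp
      -- the determinant D and its square
      have hD := good_det src tgt T c hdiag hsupp hnoloop hcycle T' hloops' hcard' hconn'
        φ₀ hφ₀inj himgiff
      set D : ℝ := (Matrix.of fun f g : {e : E // e ∉ T ∧ src e ≠ tgt e} =>
        (c g (φ₀ f) : ℝ)).det with hDdef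
      have hDcast : D = (((Matrix.of fun f g : {e : E // e ∉ T ∧ src e ≠ tgt e} =>
          c g (φ₀ f)).det : ℤ) : ℝ) := by
        have h := RingHom.map_det (Int.castRingHom ℝ)
          (Matrix.of fun f g : {e : E // e ∉ T ∧ src e ≠ tgt e} => c g (φ₀ f))
        rw [hDdef]
        exact h.symm
      have hDsq : D * D = 1 := by
        rcases hD with h | h <;> rw [hDcast, h] <;> norm_num
      -- reindex the fiber by permutations
      have hbij : ∑ σ : Equiv.Perm {e : E // e ∉ T ∧ src e ≠ tgt e}, F (φ₀ ∘ σ) =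
          ∑ r ∈ (Finset.univ.filter (fun r : {e : E // e ∉ T ∧ src e ≠ tgt e} → E =>
            Function.Injective r)).filter (fun r => (Finset.univ.image r)ᶜ = T'), F r := by
        refine Finset.sum_bij (fun σ _ => φ₀ ∘ σ) ?_ ?_ ?_ ?_
        · intro σ _
          refine Finset.mem_filter.mpr ⟨Finset.mem_filter.mpr
            ⟨Finset.mem_univ _, hφ₀inj.comp σ.injective⟩, ?_⟩
          have : Finset.univ.image (φ₀ ∘ σ) = Finset.univ.image φ₀ := by
            rw [← Finset.image_image, Finset.image_univ_equiv]
          rw [this]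
          exact hkeyφ
        · intro σ₁ _ σ₂ _ h
          exact Equiv.ext fun f => hφ₀inj (congrFun h f)
        · intro r hr
          rw [Finset.mem_filter] at hr
          obtain ⟨hr1, hrT'⟩ := hr
          rw [Finset.mem_filter] at hr1
          obtain ⟨_, hrinj⟩ := hr1
          have himr : Finset.univ.image r = Finset.univ.image φ₀ := by
            have h := hrT'.trans hkeyφ.symm
            have := congrArg (·ᶜ) h
            simpa using this
          have hex : ∀ f, ∃ g, φ₀ g = r f := by
            intro f
            have : r f ∈ Finset.univ.image φ₀ := by
              rw [← himr]
              exact Finset.mem_image_of_mem r (Finset.mem_univ f)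
            obtain ⟨g, _, hg⟩ := Finset.mem_image.mp this
            exact ⟨g, hg⟩
          choose g hg using hex
          have hginj : Function.Injective g := by
            intro a b h
            apply hrinj
            rw [← hg a, ← hg b, h]
          obtain ⟨σ, hσ⟩ : ∃ σ : Equiv.Perm {e : E // e ∉ T ∧ src e ≠ tgt e},
              (σ : {e : E // e ∉ T ∧ src e ≠ tgt e} → {e : E // e ∉ T ∧ src e ≠ tgt e}) = g :=
            ⟨Equiv.ofBijective g (Finite.injective_iff_bijective.mp hginj), rfl⟩
          refine ⟨σ, Finset.mem_univ _, ?_⟩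
          funext f
          show φ₀ (σ f) = r f
          rw [congrFun hσ f, hg f]
        · intro σ _
          rfl
      rw [← hbij]
      -- evaluate the permutation sum
      have hperm : ∀ σ : Equiv.Perm {e : E // e ∉ T ∧ src e ≠ tgt e}, F (φ₀ ∘ σ) =
          (((Equiv.Perm.sign σ : ℤ) : ℝ) * ∏ f, (c f (φ₀ (σ f)) : ℝ)) *
          ((∏ f, (x (φ₀ f))⁻¹) * D) := by
        intro σ
        simp only [hF, Function.comp]
        rw [show (Matrix.of fun f g : {e : E // e ∉ T ∧ src e ≠ tgt e} =>
            (c g (φ₀ (σ f)) : ℝ)) = (Matrix.of fun f g : {e : E // e ∉ T ∧ src e ≠ tgt e} =>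
            (c g (φ₀ f) : ℝ)).submatrix σ id from rfl]
        rw [Matrix.det_permute]
        rw [Finset.prod_mul_distrib, Equiv.prod_comp σ (fun f => (x (φ₀ f))⁻¹)]
        rw [← hDdef]
        push_cast
        ring
      rw [Finset.sum_congr rfl fun σ _ => hperm σ, ← Finset.sum_mul]
      have hdetsum : (∑ σ : Equiv.Perm {e : E // e ∉ T ∧ src e ≠ tgt e},
          ((Equiv.Perm.sign σ : ℤ) : ℝ) * ∏ f, (c f (φ₀ (σ f)) : ℝ)) = D := by
        rw [hDdef, Matrix.det_apply' (Matrix.of fun f g : {e : E // e ∉ T ∧ src e ≠ tgt e} =>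
          (c g (φ₀ f) : ℝ))]
        rfl
      rw [hdetsum]
      have hprodx : (∏ f, (x (φ₀ f))⁻¹) = ∏ e ∈ Finset.univ \ T', (x e)⁻¹ := by
        rw [← himgφ, Finset.prod_image (fun a _ b _ h => hφ₀inj h)]
      rw [← hprodx]
      calc D * ((∏ f, (x (φ₀ f))⁻¹) * D) = (D * D) * ∏ f, (x (φ₀ f))⁻¹ := by ring
        _ = ∏ f, (x (φ₀ f))⁻¹ := by rw [hDsq, one_mul]
    · rw [if_neg hPT]
      apply Finset.sum_eq_zero
      intro r hr
      rw [Finset.mem_filter] at hr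
      obtain ⟨hr1, hrT'⟩ := hr
      rw [Finset.mem_filter] at hr1
      obtain ⟨_, hrinj⟩ := hr1
      have himgiff : ∀ e, e ∈ Finset.univ.image r ↔ e ∉ T' := by
        intro e
        rw [← hrT']
        rw [Finset.mem_compl, not_not]
      have hdet0 : (Matrix.of fun f g : {e : E // e ∉ T ∧ src e ≠ tgt e} =>
          (c g (r f) : ℝ)).det = 0 := by
        by_cases hloopimg : ∃ f₀ : {e : E // e ∉ T ∧ src e ≠ tgt e}, src (r f₀) = tgt (r f₀)
        · obtain ⟨f₀, hl⟩ := hloopimg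
          exact Matrix.det_eq_zero_of_row_eq_zero f₀ (fun g => by
            show (c g (r f₀) : ℝ) = 0
            rw [hnoloop g (r f₀) hl, Int.cast_zero])
        · push_neg at hloopimg
          have hloops'' : ∀ e, src e = tgt e → e ∈ T' := by
            intro e hl
            by_contra h
            obtain ⟨f, _, hf⟩ := Finset.mem_image.mp ((himgiff e).2 h)
            exact hloopimg f (by rw [hf]; exact hl)
          have hT'card : T'.card = T.card := by
            have h1 : T' = (Finset.univ.image r)ᶜ := hrT'.symm
            have h2 : T'.card = Fintype.card E -
                Fintype.card {e : E // e ∉ T ∧ src e ≠ tgt e} := by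
              rw [h1, Finset.card_compl]
              congr 1
              rw [Finset.card_image_of_injective _ hrinj, Finset.card_univ]
            have h3 := Finset.card_le_univ T
            omega
          have hcard'' : (T'.filter (fun e => src e ≠ tgt e)).card = Fintype.card V - 1 := by
            have e1 := card_split src tgt T hloops
            have e2 := card_split src tgt T' hloops''
            rw [hcard] at e1
            omega
          have hnc : ¬ (SimpleGraph.fromEdgeSet
              {s | ∃ e ∈ T', src e ≠ tgt e ∧ s = s(src e, tgt e)}).Connected := by
            intro hC
            exact hPT ⟨hloops'', hcard'', hC⟩
          exact bad_det src tgt T hconn c hnoloop hcycle T' hnc r hrinj himgiff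
      simp only [hF, hdet0, mul_zero]
  rw [Finset.sum_congr rfl fun T' _ => key T']
  rw [← Finset.sum_filter]
  rw [Finset.powerset_univ]
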